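/- Let M_0,...,M_{m−1} be d×d circulant matrices whose columns form m mutually unbiased frames of d unit vectors each in C^d, with overlap c. Then |λ(M_j)·λ(M_k)|² = c·d² for all j ≠ k, where λ(M_j)·λ(M_k) = Σ_s conj(λ(M_j)_s)·λ(M_k)_s; hence the normalized eigenvalue vectors λ(M_j)/√d form m equiangular lines in C^d with pairwise squared overlap c. -/

import Mathlib

open Matrix

/-- The discrete Fourier transform matrix `F_{jk} = ω^{jk}/√d`, `ω = e^{2πi/d}`. -/
noncomputable def Fmat (d : ℕ) : Matrix (Fin d) (Fin d) ℂ :=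
  fun j k => Complex.exp (2 * Real.pi * Complex.I * ((j : ℕ) : ℂ) * ((k : ℕ) : ℂ) / d) /
    (Real.sqrt d : ℂ)

/-- The circulant matrix with first row `v`: entries `M_{jk} = v_{(k-j) mod d}`. -/
def circulantRow {d : ℕ} (v : Fin d → ℂ) : Matrix (Fin d) (Fin d) ℂ :=
  fun j k => v (k - j)


open Finset Complex in
lemma Fmat_unitary (d : ℕ) [NeZero d] : (Fmat d)ᴴ * Fmat d = 1 := by
  have hd0 : (d:ℂ) ≠ 0 := Nat.cast_ne_zero.mpr (NeZero.ne d)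
  have hdr : (0:ℝ) < d := by exact_mod_cast Nat.pos_of_ne_zero (NeZero.ne d)
  have hsq : (Real.sqrt d : ℂ) * (Real.sqrt d : ℂ) = d := by
    rw [← Complex.ofReal_mul, Real.mul_self_sqrt hdr.le]; push_cast; ring
  ext s t
  rw [Matrix.mul_apply, Matrix.one_apply]
  set z : ℂ := Complex.exp (2 * Real.pi * Complex.I * (((t:ℕ):ℂ) - ((s:ℕ):ℂ)) / d) with hz
  have hterm : ∀ p : Fin d, (Fmat d)ᴴ s p * Fmat d p t = z ^ (p:ℕ) / d := by
    intro p
    simp only [conjTranspose_apply, Fmat, Complex.star_def, map_div₀, ← Complex.exp_conj,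
      _root_.map_mul, Complex.conj_I, Complex.conj_ofReal, map_natCast, map_ofNat]
    rw [div_mul_div_comm, ← Complex.exp_add, hsq, hz, ← Complex.exp_nat_mul]
    congr 2
    field_simp
    ring
  rw [Finset.sum_congr rfl (fun p _ => hterm p)]
  by_cases hst : s = t
  · subst hst
    simp only [sub_self, mul_zero, zero_div, Complex.exp_zero, zero_mul] at hz
    simp [hz, Finset.card_univ, hd0]
  · rw [if_neg hst]
    have hzd : z ^ d = 1 := by
      rw [hz, ← Complex.exp_nat_mul]
      have h1 : (d:ℂ) * (2 * Real.pi * Complex.I * (((t:ℕ):ℂ) - ((s:ℕ):ℂ)) / d)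
          = (((t:ℤ) - (s:ℤ) : ℤ) : ℂ) * (2 * Real.pi * Complex.I) := by
        push_cast; field_simp
      rw [h1, Complex.exp_int_mul_two_pi_mul_I]
    have hz1 : z ≠ 1 := by
      rw [hz, Ne, Complex.exp_eq_one_iff]
      rintro ⟨n, hn⟩
      have h2 : (2 * (Real.pi:ℂ) * Complex.I) ≠ 0 := by
        simp [Real.pi_ne_zero, Complex.I_ne_zero, Complex.ofReal_ne_zero]
      have hcast : ((t:ℕ):ℂ) - ((s:ℕ):ℂ) = (n:ℂ) * d := by
        field_simp at hn
        apply mul_left_cancel₀ h2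
        linear_combination (2 * (Real.pi:ℂ) * Complex.I) * hn
      have heq : ((t:ℕ):ℤ) - ((s:ℕ):ℤ) = n * d := by exact_mod_cast hcast
      have ht := t.isLt; have hs := s.isLt
      have hst' : (t:ℕ) ≠ (s:ℕ) := fun h => hst (Fin.ext h).symm
      have hd' : (0:ℤ) < (d:ℤ) := by exact_mod_cast Nat.pos_of_ne_zero (NeZero.ne d)
      rcases lt_trichotomy n 0 with h | h | h
      · have hn1 : n ≤ -1 := by omega
        nlinarith [mul_le_mul_of_nonneg_right hn1 hd'.le,
          (show ((s:ℕ):ℤ) < d by exact_mod_cast hs), (show (0:ℤ) ≤ ((t:ℕ):ℤ) by positivity)]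
      · subst h; simp at heq; omega
      · have hn1 : 1 ≤ n := by omega
        nlinarith [mul_le_mul_of_nonneg_right hn1 hd'.le,
          (show ((t:ℕ):ℤ) < d by exact_mod_cast ht), (show (0:ℤ) ≤ ((s:ℕ):ℤ) by positivity)]
    have hsum : ∑ p : Fin d, z ^ (p:ℕ) = 0 := by
      rw [Fin.sum_univ_eq_sum_range (fun i => z ^ i), geom_sum_eq hz1 d, hzd, sub_self, zero_div]
    rw [← Finset.sum_div, hsum, zero_div]

/-- If `m` circulant matrices `M_0,…,M_{m-1}` of order `d` have columns
forming `m` mutually unbiased frames of `d` unit vectors each with overlap `c`, then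
`|λ(M_j)·λ(M_k)|² = c·d²` for all `j ≠ k`; hence the normalized eigenvalue vectors
`λ(M_j)/√d` form `m` equiangular lines in ℂ^d with pairwise squared overlap `c`. -/
theorem muf_circulant_equiangular_eigenvectors (d m : ℕ) [NeZero d] (c : ℝ) (hc : 0 < c)
    (M : Fin m → Matrix (Fin d) (Fin d) ℂ)
    (lam : Fin m → Fin d → ℂ)
    (hcirc : ∀ ℓ, ∃ μ : Fin d → ℂ, M ℓ = circulantRow μ)
    (hdiag : ∀ ℓ, M ℓ = Fmat d * Matrix.diagonal (lam ℓ) * (Fmat d)ᴴ)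
    (hunit : ∀ ℓ k, ∑ j, ‖M ℓ j k‖ ^ 2 = 1)
    (hframe : ∀ ℓ, LinearIndependent ℂ (fun k => (M ℓ)ᵀ k))
    (hmuf : ∀ j k, j ≠ k → ∀ s t, ‖((M j)ᴴ * M k) s t‖ ^ 2 = c) :
    (∀ j k, j ≠ k → ‖∑ s, (starRingEnd ℂ) (lam j s) * lam k s‖ ^ 2 = c * d ^ 2) ∧
    (∀ j k, j ≠ k →
      ‖∑ s, (starRingEnd ℂ) ((1 / (Real.sqrt d : ℂ)) * lam j s) *
        ((1 / (Real.sqrt d : ℂ)) * lam k s)‖ ^ 2 = c) := by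
  have hFu := Fmat_unitary d
  have hd0 : (d:ℂ) ≠ 0 := Nat.cast_ne_zero.mpr (NeZero.ne d)
  have hdr : (0:ℝ) < d := by exact_mod_cast Nat.pos_of_ne_zero (NeZero.ne d)
  have hsq : (Real.sqrt d : ℂ) * (Real.sqrt d : ℂ) = d := by
    rw [← Complex.ofReal_mul, Real.mul_self_sqrt hdr.le]; push_cast; ring
  have hF0 : ∀ s : Fin d, Fmat d 0 s = 1 / (Real.sqrt d : ℂ) := by
    intro s; simp [Fmat]
  have key : ∀ j k, ((M j)ᴴ * M k) =
      Fmat d * Matrix.diagonal (fun s => (starRingEnd ℂ) (lam j s) * lam k s) * (Fmat d)ᴴ := by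
    intro j k
    rw [hdiag j, hdiag k]
    rw [conjTranspose_mul, conjTranspose_mul, conjTranspose_conjTranspose,
      diagonal_conjTranspose]
    calc (Fmat d * (Matrix.diagonal (star (lam j)) * (Fmat d)ᴴ)) *
          (Fmat d * Matrix.diagonal (lam k) * (Fmat d)ᴴ)
        = Fmat d * (Matrix.diagonal (star (lam j)) * (((Fmat d)ᴴ * Fmat d) *
            (Matrix.diagonal (lam k) * (Fmat d)ᴴ))) := by
          simp only [Matrix.mul_assoc]
      _ = Fmat d * Matrix.diagonal (fun s => (starRingEnd ℂ) (lam j s) * lam k s) * (Fmat d)ᴴ := by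
          rw [hFu, Matrix.one_mul]
          simp only [← Matrix.mul_assoc]
          rw [Matrix.mul_assoc (Fmat d), diagonal_mul_diagonal]
          rfl
  have e00 : ∀ j k, ((M j)ᴴ * M k) 0 0 = (∑ s, (starRingEnd ℂ) (lam j s) * lam k s) / d := by
    intro j k
    rw [key j k, Matrix.mul_apply, Finset.sum_div]
    refine Finset.sum_congr rfl fun s _ => ?_
    rw [Matrix.mul_diagonal, conjTranspose_apply, hF0 s, Complex.star_def, map_div₀, _root_.map_one,
      Complex.conj_ofReal]
    field_simp
    rw [sq, hsq]
    field_simp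
  have normd : ∀ j k (h : j ≠ k), ‖∑ s, (starRingEnd ℂ) (lam j s) * lam k s‖ ^ 2 = c * d ^ 2 := by
    intro j k h
    have hm := hmuf j k h 0 0
    rw [e00 j k] at hm
    rw [norm_div] at hm
    have hnd : ‖(d:ℂ)‖ = (d:ℝ) := by simp
    rw [hnd, div_pow] at hm
    field_simp at hm ⊢
    linarith [hm]
  refine ⟨normd, fun j k h => ?_⟩
  have hsum2 : (∑ s, (starRingEnd ℂ) ((1 / (Real.sqrt d : ℂ)) * lam j s) *
      ((1 / (Real.sqrt d : ℂ)) * lam k s))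
      = (∑ s, (starRingEnd ℂ) (lam j s) * lam k s) / d := by
    rw [Finset.sum_div]
    refine Finset.sum_congr rfl fun s _ => ?_
    rw [_root_.map_mul, map_div₀, _root_.map_one, Complex.conj_ofReal]
    field_simp
    rw [sq, hsq]
    field_simp
  rw [hsum2, norm_div]
  have hnd : ‖(d:ℂ)‖ = (d:ℝ) := by simp
  rw [hnd, div_pow, normd j k h]
  field_simp
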